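/- Let G=(V,E) be a finite connected simple graph and (X_t)_{t≥0} the 3-color CCA trajectory of an initial 3-coloring X_0 : V → ℤ/3ℤ. Then X_t synchronizes if and only if dX_0 is irrotational, i.e., the contour integral of dX_0 over every closed directed cycle of G is zero. -/

import Mathlib

noncomputable section
attribute [local instance] Classical.propDecidable

open Filter

variable {V : Type*}

/-- Unique representative in `{-1,0,1}` of an element of `ℤ/3ℤ`. -/
def ZMod.repInt (a : ZMod 3) : ℤ := if a = 0 then 0 else if a = 1 then 1 else -1

/-- One step of the 3-color cyclic cellular automaton. -/
def ccaStep (G : SimpleGraph V) (X : V → ZMod 3) : V → ZMod 3 :=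
  fun v => if ∃ u, G.Adj v u ∧ X u = X v + 1 then X v + 1 else X v

/-- The CCA trajectory started from `X₀`. -/
def ccaTraj (G : SimpleGraph V) (X₀ : V → ZMod 3) : ℕ → V → ZMod 3 :=
  fun t => (ccaStep G)^[t] X₀

/-- A vertex is excited at time `t` for CCA iff its color advances. -/
def ccaExcited (G : SimpleGraph V) (X₀ : V → ZMod 3) (t : ℕ) (v : V) : Prop :=
  ccaTraj G X₀ (t + 1) v = ccaTraj G X₀ t v + 1

/-- Number of excitations of `x` at times `0, …, t-1` (CCA). -/
def ccaNe (G : SimpleGraph V) (X₀ : V → ZMod 3) (t : ℕ) (x : V) : ℕ :=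
  ((Finset.range t).filter fun s => ccaExcited G X₀ s x).card

/-- The CCA 1-form `dX` on ordered pairs of vertices. -/
def dXcca (X : V → ZMod 3) (u v : V) : ℤ := (X v - X u).repInt

/-- Path integral of the CCA 1-form along a walk. -/
def walkIntCCA {G : SimpleGraph V} (X : V → ZMod 3) {x y : V} (w : G.Walk x y) : ℤ :=
  (w.darts.map fun d => dXcca X d.toProd.1 d.toProd.2).sum

/-! ### Auxiliary lemmas on `ZMod.repInt` -/

lemma zmod3_cases (a : ZMod 3) : a = 0 ∨ a = 1 ∨ a = 2 := by
  fin_cases a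
  exacts [Or.inl rfl, Or.inr (Or.inl rfl), Or.inr (Or.inr rfl)]

lemma repInt_cast (a : ZMod 3) : ((a.repInt : ℤ) : ZMod 3) = a := by
  rcases zmod3_cases a with h | h | h <;> subst h <;> simp [ZMod.repInt] <;> decide

lemma repInt_bounds (a : ZMod 3) : -1 ≤ a.repInt ∧ a.repInt ≤ 1 := by
  unfold ZMod.repInt; split
  · omega
  · split <;> omega

lemma repInt_unique {a : ZMod 3} {z : ℤ} (h1 : -1 ≤ z) (h2 : z ≤ 1) (h : (z : ZMod 3) = a) :
    z = a.repInt := by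
  interval_cases z <;> rw [← h] <;> norm_num [ZMod.repInt] <;> decide

lemma repInt_neg (a : ZMod 3) : (-a).repInt = -a.repInt := by
  rcases zmod3_cases a with h | h | h <;> subst h <;>
    norm_num [ZMod.repInt, show ((-1 : ZMod 3)) = 2 by decide, show ((-2 : ZMod 3)) = 1 by decide]
    <;> decide

lemma repInt_eq_one {a : ZMod 3} (h : a.repInt = 1) : a = 1 := by
  rcases zmod3_cases a with h' | h' | h' <;> subst h' <;> revert h <;>
    norm_num [ZMod.repInt] <;> decide

lemma repInt_eq_negone {a : ZMod 3} (h : a.repInt = -1) : a = 2 := by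
  rcases zmod3_cases a with h' | h' | h' <;> subst h' <;> revert h <;>
    norm_num [ZMod.repInt] <;> decide

lemma repInt_eq_zero {a : ZMod 3} (h : a.repInt = 0) : a = 0 := by
  rcases zmod3_cases a with h' | h' | h' <;> subst h' <;> revert h <;>
    norm_num [ZMod.repInt] <;> decide

/-! ### Dynamics of the CCA -/

section Dyn
variable (G : SimpleGraph V) (X₀ : V → ZMod 3)

lemma ccaTraj_zero : ccaTraj G X₀ 0 = X₀ := rfl

lemma ccaTraj_succ (t : ℕ) : ccaTraj G X₀ (t + 1) = ccaStep G (ccaTraj G X₀ t) :=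
  Function.iterate_succ_apply' _ _ _

/-- The excitation indicator as an integer. -/
def eInd (t : ℕ) (v : V) : ℤ := if ccaExcited G X₀ t v then 1 else 0

lemma ccaExcited_iff (t : ℕ) (v : V) :
    ccaExcited G X₀ t v ↔ ∃ u, G.Adj v u ∧ ccaTraj G X₀ t u = ccaTraj G X₀ t v + 1 := by
  unfold ccaExcited
  rw [ccaTraj_succ]
  unfold ccaStep
  split
  · simp_all
  · constructor
    · intro h; exact absurd h.symm (by simp [show (1:ZMod 3) ≠ 0 by decide])
    · intro h; simp_all

lemma ccaTraj_succ_apply (t : ℕ) (v : V) :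
    ccaTraj G X₀ (t + 1) v = ccaTraj G X₀ t v + (eInd G X₀ t v : ZMod 3) := by
  by_cases h : ccaExcited G X₀ t v
  · simp only [eInd, h, if_true, Int.cast_one]; exact h
  · simp only [eInd, h, if_false, Int.cast_zero, add_zero]
    conv_lhs => rw [ccaTraj_succ]
    unfold ccaStep
    split
    · exact absurd (by unfold ccaExcited; rw [ccaTraj_succ]; unfold ccaStep; rw [if_pos ‹_›]) h
    · rfl

lemma ccaNe_succ (t : ℕ) (x : V) :
    (ccaNe G X₀ (t + 1) x : ℤ) = ccaNe G X₀ t x + eInd G X₀ t x := by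
  unfold ccaNe eInd
  rw [Finset.range_add_one, Finset.filter_insert]
  by_cases h : ccaExcited G X₀ t x
  · rw [if_pos h, if_pos h, Finset.card_insert_of_notMem (by simp)]
    push_cast; ring
  · rw [if_neg h, if_neg h]; push_cast; ring

lemma ccaNe_zero (x : V) : ccaNe G X₀ 0 x = 0 := by simp [ccaNe]

lemma ccaNe_mono (t : ℕ) (x : V) : ccaNe G X₀ t x ≤ ccaNe G X₀ (t+1) x := by
  unfold ccaNe
  apply Finset.card_le_card
  intro s hs
  simp only [Finset.mem_filter, Finset.mem_range] at hs ⊢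
  exact ⟨by omega, hs.2⟩

lemma excited_of_dX_one {u v : V} (h : G.Adj u v) (t : ℕ)
    (hd1 : dXcca (ccaTraj G X₀ t) u v = 1) : ccaExcited G X₀ t u := by
  unfold dXcca at hd1
  have hr := repInt_eq_one hd1
  rw [ccaExcited_iff]
  exact ⟨v, h, by linear_combination hr⟩

lemma excited_of_dX_negone {u v : V} (h : G.Adj u v) (t : ℕ)
    (hd1 : dXcca (ccaTraj G X₀ t) u v = -1) : ccaExcited G X₀ t v := by
  have h3 : (3 : ZMod 3) = 0 := by decide
  unfold dXcca at hd1
  have hr := repInt_eq_negone hd1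
  rw [ccaExcited_iff]
  exact ⟨u, h.symm, by linear_combination -hr - h3⟩

/-- Key edge evolution law. -/
lemma dX_step {u v : V} (h : G.Adj u v) (t : ℕ) :
    dXcca (ccaTraj G X₀ (t + 1)) u v
      = dXcca (ccaTraj G X₀ t) u v + eInd G X₀ t v - eInd G X₀ t u := by
  have hb1 : -1 ≤ dXcca (ccaTraj G X₀ t) u v := by unfold dXcca; exact (repInt_bounds _).1
  have hb2 : dXcca (ccaTraj G X₀ t) u v ≤ 1 := by unfold dXcca; exact (repInt_bounds _).2
  have h1 := excited_of_dX_one G X₀ h t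
  have h2 := excited_of_dX_negone G X₀ h t
  have hcast : ((dXcca (ccaTraj G X₀ t) u v + eInd G X₀ t v - eInd G X₀ t u : ℤ) : ZMod 3)
      = ccaTraj G X₀ (t+1) v - ccaTraj G X₀ (t+1) u := by
    push_cast
    unfold dXcca
    rw [repInt_cast, ccaTraj_succ_apply, ccaTraj_succ_apply]
    ring
  have key := repInt_unique (a := ccaTraj G X₀ (t+1) v - ccaTraj G X₀ (t+1) u)
    (z := dXcca (ccaTraj G X₀ t) u v + eInd G X₀ t v - eInd G X₀ t u) ?_ ?_ hcast
  · conv_lhs => unfold dXcca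
    rw [← key]
  · by_cases hu : ccaExcited G X₀ t u <;> by_cases hv : ccaExcited G X₀ t v <;>
      simp only [eInd, hu, hv, if_true, if_false]
    all_goals
      first
        | omega
        | (have hne : dXcca (ccaTraj G X₀ t) u v ≠ -1 := fun he => hv (h2 he); omega)
  · by_cases hu : ccaExcited G X₀ t u <;> by_cases hv : ccaExcited G X₀ t v <;>
      simp only [eInd, hu, hv, if_true, if_false]
    all_goals
      first
        | omega
        | (have hne : dXcca (ccaTraj G X₀ t) u v ≠ 1 := fun he => hu (h1 he); omega)

lemma dX_traj {u v : V} (h : G.Adj u v) (t : ℕ) :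
    dXcca (ccaTraj G X₀ t) u v
      = dXcca X₀ u v + (ccaNe G X₀ t v : ℤ) - (ccaNe G X₀ t u : ℤ) := by
  induction t with
  | zero => simp [ccaTraj_zero, ccaNe_zero]
  | succ t ih => rw [dX_step G X₀ h t, ih, ccaNe_succ, ccaNe_succ]; ring

end Dyn

/-! ### Walk integrals -/

section WalkInt
open SimpleGraph
variable {G : SimpleGraph V} (X : V → ZMod 3)

lemma dXcca_symm (u v : V) : dXcca X v u = -dXcca X u v := by
  unfold dXcca
  rw [← repInt_neg]
  congr 1
  ring

@[simp] lemma walkInt_nil {x : V} : walkIntCCA X (Walk.nil : G.Walk x x) = 0 := rfl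

lemma walkInt_cons {x y z : V} (h : G.Adj x y) (p : G.Walk y z) :
    walkIntCCA X (Walk.cons h p) = dXcca X x y + walkIntCCA X p := by
  simp [walkIntCCA, Walk.darts]

lemma walkInt_append {x y z : V} (p : G.Walk x y) (q : G.Walk y z) :
    walkIntCCA X (p.append q) = walkIntCCA X p + walkIntCCA X q := by
  unfold walkIntCCA
  rw [Walk.darts_append, List.map_append, List.sum_append]

lemma walkInt_reverse {x y : V} (p : G.Walk x y) :
    walkIntCCA X p.reverse = -walkIntCCA X p := by
  unfold walkIntCCA
  rw [Walk.darts_reverse, List.map_reverse, List.sum_reverse, List.map_map]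
  induction p.darts with
  | nil => simp
  | cons d l ih =>
    simp only [List.map_cons, List.sum_cons, ih]
    have : dXcca X d.toProd.2 d.toProd.1 = -dXcca X d.toProd.1 d.toProd.2 := dXcca_symm X _ _
    simp [Function.comp, SimpleGraph.Dart.symm, this]
    ring

lemma walkInt_traj (G : SimpleGraph V) (X₀ : V → ZMod 3) (t : ℕ) {x y : V} (w : G.Walk x y) :
    walkIntCCA (ccaTraj G X₀ t) w
      = walkIntCCA X₀ w + (ccaNe G X₀ t y : ℤ) - (ccaNe G X₀ t x : ℤ) := by
  induction w with
  | nil => simp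
  | @cons u v' y' ha p ih =>
    rw [walkInt_cons, walkInt_cons, ih, dX_traj G X₀ ha t]
    ring

lemma walkInt_const {X : V → ZMod 3} (hX : ∀ a b : V, X a = X b) {x y : V} (w : G.Walk x y) :
    walkIntCCA X w = 0 := by
  induction w with
  | nil => simp
  | @cons u v' y' ha p ih =>
    rw [walkInt_cons, ih]
    unfold dXcca
    rw [hX u v', sub_self]
    simp [ZMod.repInt]

end WalkInt

/-! ### From vanishing cycle integrals to vanishing closed-walk integrals -/

section Irrot
open SimpleGraph
variable {G : SimpleGraph V} {X : V → ZMod 3}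

lemma closed_cons_int (hyp : ∀ (v : V) (c : G.Walk v v), c.IsCycle → walkIntCCA X c = 0)
    {u w : V} (h : G.Adj u w) (q : G.Walk w u) (hq : q.IsPath) :
    dXcca X u w + walkIntCCA X q = 0 := by
  by_cases he : s(u, w) ∈ q.edges
  · cases q with
    | nil => exact absurd rfl h.ne'
    | @cons _ z _ h2 r =>
      rw [Walk.edges_cons, List.mem_cons] at he
      rcases he with he' | he'
      · have hz : z = u := by
          rw [Sym2.eq_iff] at he'
          rcases he' with ⟨h1, h2'⟩ | ⟨h1, _⟩
          · exact absurd h1 h.ne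
          · exact h1.symm
        subst hz
        have hr : r = Walk.nil := Walk.isPath_iff_eq_nil |>.mp hq.of_cons
        subst hr
        rw [walkInt_cons, walkInt_nil, add_zero, dXcca_symm]
        ring
      · exfalso
        have hw : w ∈ r.support := Walk.snd_mem_support_of_mem_edges r he'
        have := hq.support_nodup
        rw [Walk.support_cons, List.nodup_cons] at this
        exact this.1 hw
  · have hc : (Walk.cons h q).IsCycle := (Walk.cons_isCycle_iff q h).mpr ⟨hq, he⟩
    have h0 := hyp u (Walk.cons h q) hc
    rwa [walkInt_cons] at h0

lemma walkInt_bypass (hyp : ∀ (v : V) (c : G.Walk v v), c.IsCycle → walkIntCCA X c = 0)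
    {x y : V} (w : G.Walk x y) :
    walkIntCCA X w = walkIntCCA X w.bypass := by
  induction w with
  | nil => rfl
  | @cons u v' y' ha p ih =>
    simp only [Walk.bypass]
    split_ifs with hs
    · rw [walkInt_cons, ih]
      conv_lhs => rw [← Walk.take_spec p.bypass hs]
      rw [walkInt_append]
      have h0 := closed_cons_int hyp ha (p.bypass.takeUntil u hs)
        ((Walk.bypass_isPath p).takeUntil hs)
      linarith
    · rw [walkInt_cons, walkInt_cons, ih]

lemma closedWalkInt_zero (hyp : ∀ (v : V) (c : G.Walk v v), c.IsCycle → walkIntCCA X c = 0)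
    {u : V} (c : G.Walk u u) : walkIntCCA X c = 0 := by
  rw [walkInt_bypass hyp c]
  have : c.bypass = Walk.nil := Walk.isPath_iff_eq_nil.mp (Walk.bypass_isPath c)
  rw [this, walkInt_nil]

end Irrot

/-- A monotone integer sequence bounded above is eventually constant. -/
lemma mono_bounded_stab (f : ℕ → ℤ) (M : ℤ) (hm : ∀ t, f t ≤ f (t+1)) (hb : ∀ t, f t ≤ M) :
    ∃ N, ∀ t ≥ N, f t = f N := by
  have hmono : Monotone f := monotone_nat_of_le_succ hm
  have hne : (Set.range fun t => (M - f t).toNat).Nonempty := Set.range_nonempty _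
  obtain ⟨N, hN⟩ := Nat.sInf_mem hne
  have hN' : (M - f N).toNat = sInf (Set.range fun t => (M - f t).toNat) := hN
  refine ⟨N, fun t ht => ?_⟩
  have h1 : sInf (Set.range fun t => (M - f t).toNat) ≤ (M - f t).toNat :=
    Nat.sInf_le ⟨t, rfl⟩
  have h2 := hmono ht
  have h3 := hb t
  have h4 := hb N
  omega

/-- On a finite connected graph, the 3-color CCA trajectory synchronizes iff `dX₀`
is irrotational, i.e., has vanishing contour integral over every directed cycle. -/
theorem cca_synchronizes_iff_irrotational [Fintype V] (G : SimpleGraph V)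
    (hconn : G.Connected) (X₀ : V → ZMod 3) :
    (∀ x y : V, ∃ N : ℕ, ∀ t ≥ N, ccaTraj G X₀ t x = ccaTraj G X₀ t y) ↔
    (∀ (v : V) (c : G.Walk v v), c.IsCycle → walkIntCCA X₀ c = 0) := by
  haveI : Nonempty V := hconn.nonempty
  constructor
  · -- synchronization → irrotational
    intro hsync v c _
    choose N hN using hsync
    set T := Finset.univ.sup fun p : V × V => N p.1 p.2 with hT
    have hconst : ∀ a b : V, ccaTraj G X₀ T a = ccaTraj G X₀ T b := by
      intro a b
      exact hN a b T (Finset.le_sup (f := fun p : V × V => N p.1 p.2) (Finset.mem_univ (a, b)))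
    have h1 : walkIntCCA (ccaTraj G X₀ T) c = 0 := walkInt_const hconst c
    have h2 := walkInt_traj G X₀ T c
    rw [h1] at h2
    linarith
  · -- irrotational → synchronization
    intro hyp x y
    obtain ⟨r⟩ := hconn.nonempty
    -- potential at time 0
    set h0 : V → ℤ := fun v => walkIntCCA X₀ ((hconn.preconnected r v).some) with hh0
    have hgrad : ∀ {u v : V}, G.Adj u v → dXcca X₀ u v = h0 v - h0 u := by
      intro u v huv
      have hc := closedWalkInt_zero hyp
        ((((hconn.preconnected r u).some).append (SimpleGraph.Walk.cons huv SimpleGraph.Walk.nil)).append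
          ((hconn.preconnected r v).some).reverse)
      rw [walkInt_append, walkInt_append, walkInt_reverse, walkInt_cons, walkInt_nil] at hc
      simp only [hh0]
      linarith
    -- time-dependent potential
    set Ht : ℕ → V → ℤ := fun t v => h0 v + (ccaNe G X₀ t v : ℤ) with hHt
    have hgradt : ∀ (t : ℕ) {u v : V}, G.Adj u v →
        dXcca (ccaTraj G X₀ t) u v = Ht t v - Ht t u := by
      intro t u v huv
      rw [dX_traj G X₀ huv t, hgrad huv, hHt]
      ring
    -- bound
    set M : ℤ := Finset.univ.sup' Finset.univ_nonempty h0 with hM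
    have hM0 : ∀ v : V, h0 v ≤ M := fun v => Finset.le_sup' h0 (Finset.mem_univ v)
    have hbound : ∀ t (v : V), Ht t v ≤ M := by
      intro t
      induction t with
      | zero => intro v; simp [hHt, ccaNe_zero]; exact hM0 v
      | succ t ih =>
        intro v
        by_cases hexc : ccaExcited G X₀ t v
        · obtain ⟨u, hadj, hXu⟩ := (ccaExcited_iff G X₀ t v).mp hexc
          have hd : dXcca (ccaTraj G X₀ t) v u = 1 := by
            unfold dXcca
            rw [hXu]
            rw [show ccaTraj G X₀ t v + 1 - ccaTraj G X₀ t v = 1 by ring]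
            simp [ZMod.repInt, show (1 : ZMod 3) ≠ 0 by decide]
          have hstep : Ht (t+1) v = Ht t v + 1 := by
            simp only [hHt]
            rw [ccaNe_succ]
            simp [eInd, hexc]
            ring
          have := hgradt t hadj
          rw [hd] at this
          have := ih u
          omega
        · have hstep : Ht (t+1) v = Ht t v := by
            simp only [hHt]
            rw [ccaNe_succ]
            simp [eInd, hexc]
          rw [hstep]
          exact ih v
    have hmono : ∀ (v : V) (t : ℕ), Ht t v ≤ Ht (t+1) v := by
      intro v t
      simp only [hHt]
      have := ccaNe_mono G X₀ t v
      omega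
    -- stabilization
    have hstab : ∀ v : V, ∃ N, ∀ t ≥ N, Ht t v = Ht N v := by
      intro v
      exact mono_bounded_stab (fun t => Ht t v) M (fun t => hmono v t) (fun t => hbound t v)
    choose Nv hNv using hstab
    set N := Finset.univ.sup Nv with hNdef
    have hstable : ∀ (v : V) (t : ℕ), t ≥ N → Ht t v = Ht N v := by
      intro v t ht
      have hv : Nv v ≤ N := Finset.le_sup (Finset.mem_univ v)
      rw [hNv v t (le_trans hv ht), hNv v N hv]
    -- no excitations after N
    have hnoexc : ∀ (t : ℕ), t ≥ N → ∀ v : V, ¬ccaExcited G X₀ t v := by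
      intro t ht v hexc
      have h1 : Ht (t+1) v = Ht t v := by
        rw [hstable v (t+1) (by omega), hstable v t ht]
      simp only [hHt] at h1
      rw [ccaNe_succ] at h1
      simp [eInd, hexc] at h1
    -- local constancy after N
    have hlocal : ∀ (t : ℕ), t ≥ N → ∀ {u v : V}, G.Adj u v →
        ccaTraj G X₀ t u = ccaTraj G X₀ t v := by
      intro t ht u v hadj
      have hb := repInt_bounds (ccaTraj G X₀ t v - ccaTraj G X₀ t u)
      have hd : dXcca (ccaTraj G X₀ t) u v = -1 ∨ dXcca (ccaTraj G X₀ t) u v = 0 ∨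
          dXcca (ccaTraj G X₀ t) u v = 1 := by
        unfold dXcca; omega
      rcases hd with hd | hd | hd
      · exact absurd (excited_of_dX_negone G X₀ hadj t hd) (hnoexc t ht v)
      · unfold dXcca at hd
        have := repInt_eq_zero hd
        rw [sub_eq_zero] at this
        exact this.symm
      · exact absurd (excited_of_dX_one G X₀ hadj t hd) (hnoexc t ht u)
    -- global constancy along walks
    have hwalk : ∀ (t : ℕ), t ≥ N → ∀ {a b : V} (w : G.Walk a b),
        ccaTraj G X₀ t a = ccaTraj G X₀ t b := by
      intro t ht a b w
      induction w with
      | nil => rfl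
      | @cons p q s hpq w' ih => rw [hlocal t ht hpq, ih]
    exact ⟨N, fun t ht => hwalk t ht ((hconn.preconnected x y).some)⟩
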